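/- In the upper half-plane model of H², let v : [0, b] → H² be a unit-speed C² curve with v(0) = (0,1), initial tangent v'(0) = −E₁ (where E₁ = y∂ₓ), and suppose its geodesic curvature k_g (with respect to the normal Jv') satisfies k_g(s) < 2H ≤ 1 for all s and the total turning ∫₀ᵇ θ'(s) ds over any subinterval is at most φ < π/2 where k_g = 2H − θ' with θ' > 0. If v(s₀) lies on the y-axis for some s₀ ∈ (0,b] with x(s) < 0 on (0,s₀), and the curve meets the y-axis at v(s₀) making unoriented angle α with it, then the Gauss–Bonnet formula applied to the region U enclosed by v([0,s₀]) and the segment of the y-axis between (0,1) and v(s₀) gives −area(U) = π/2 + α − ∫₀^{s₀} θ'(s) ds + 2H s₀, and consequently π/2 + α − φ + 2Hs₀ < 0, which is impossible; hence the first coordinate x(s) of v(s) is strictly negative for all s ∈ (0, b]. -/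

import Mathlib

open Real Set Filter Topology


private lemma aux_first_ge {f : ℝ → ℝ} {a b c : ℝ}
    (hf : ContinuousOn f (Set.Icc a b))
    (ha : f a < c) (hex : ∃ s ∈ Set.Icc a b, c ≤ f s) :
    ∃ t ∈ Set.Ioc a b, f t = c ∧ ∀ s ∈ Set.Ico a t, f s < c := by
  obtain ⟨s₁, hs₁, hfs₁⟩ := hex
  set S := {s ∈ Set.Icc a b | c ≤ f s} with hSdef
  have hSclosed : IsClosed S :=
    hf.preimage_isClosed_of_isClosed isClosed_Icc isClosed_Ici
  have hSne : S.Nonempty := ⟨s₁, hs₁, hfs₁⟩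
  have hSbdd : BddBelow S := ⟨a, fun u hu => hu.1.1⟩
  have htS : sInf S ∈ S := hSclosed.csInf_mem hSne hSbdd
  set t := sInf S with htdef
  have htb : t ∈ Set.Icc a b := htS.1
  have hct : c ≤ f t := htS.2
  have hta : a < t := by
    rcases lt_or_eq_of_le htb.1 with h | h
    · exact h
    · exact absurd (h ▸ hct) (not_le.2 ha)
  have hlt : ∀ s ∈ Set.Ico a t, f s < c := by
    intro s hs
    by_contra hcon
    have hmem : s ∈ S := ⟨⟨hs.1, hs.2.le.trans htb.2⟩, not_lt.1 hcon⟩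
    exact absurd (csInf_le hSbdd hmem) (not_le.2 hs.2)
  refine ⟨t, ⟨hta, htb.2⟩, le_antisymm ?_ hct, hlt⟩
  have hne : (𝓝[Set.Ioo a t] t).NeBot := by
    rw [nhdsWithin_Ioo_eq_nhdsLT hta]
    infer_instance
  have htend : Filter.Tendsto f (𝓝[Set.Ioo a t] t) (𝓝 (f t)) :=
    (hf.continuousWithinAt htb).mono_left
      (nhdsWithin_mono _ (fun u hu => ⟨hu.1.le, hu.2.le.trans htb.2⟩))
  exact le_of_tendsto htend (Filter.eventually_of_mem self_mem_nhdsWithin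
    fun s hs => (hlt s ⟨hs.1.le, hs.2⟩).le)

private lemma aux_last_le {f : ℝ → ℝ} {a b c : ℝ} (hab : a ≤ b)
    (hf : ContinuousOn f (Set.Icc a b))
    (ha : f a ≤ c) (hb : c < f b) :
    ∃ t ∈ Set.Ico a b, f t = c ∧ ∀ s ∈ Set.Ioc t b, c < f s := by
  set S := {s ∈ Set.Icc a b | f s ≤ c} with hSdef
  have hSclosed : IsClosed S :=
    hf.preimage_isClosed_of_isClosed isClosed_Icc isClosed_Iic
  have hSne : S.Nonempty := ⟨a, ⟨le_refl a, hab⟩, ha⟩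
  have hSbdd : BddAbove S := ⟨b, fun u hu => hu.1.2⟩
  have htS : sSup S ∈ S := hSclosed.csSup_mem hSne hSbdd
  set t := sSup S with htdef
  have htb : t ∈ Set.Icc a b := htS.1
  have hct : f t ≤ c := htS.2
  have htbb : t < b := by
    rcases lt_or_eq_of_le htb.2 with h | h
    · exact h
    · exact absurd (h ▸ hct) (not_le.2 hb)
  have hlt : ∀ s ∈ Set.Ioc t b, c < f s := by
    intro s hs
    by_contra hcon
    have hmem : s ∈ S := ⟨⟨htb.1.trans hs.1.le, hs.2⟩, not_lt.1 hcon⟩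
    exact absurd (le_csSup hSbdd hmem) (not_le.2 hs.1)
  refine ⟨t, ⟨htb.1, htbb⟩, le_antisymm hct ?_, hlt⟩
  have hne : (𝓝[Set.Ioo t b] t).NeBot := by
    rw [nhdsWithin_Ioo_eq_nhdsGT htbb]
    infer_instance
  have htend : Filter.Tendsto f (𝓝[Set.Ioo t b] t) (𝓝 (f t)) :=
    (hf.continuousWithinAt htb).mono_left
      (nhdsWithin_mono _ (fun u hu => ⟨htb.1.trans hu.1.le, hu.2.le⟩))
  exact ge_of_tendsto htend (Filter.eventually_of_mem self_mem_nhdsWithin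
    fun s hs => (hlt s ⟨hs.1, hs.2.le⟩).le)

private lemma aux_deriv_nonneg_right {f : ℝ → ℝ} {t d T : ℝ} (hf : HasDerivAt f d t)
    (htT : t < T) (h0 : f t = 0) (hpos : ∀ s ∈ Set.Ioc t T, 0 < f s) : 0 ≤ d := by
  have hs : Filter.Tendsto (slope f t) (𝓝[>] t) (𝓝 d) :=
    (hasDerivAt_iff_tendsto_slope.1 hf).mono_left
      (nhdsWithin_mono _ (fun u hu => LT.lt.ne' hu))
  refine ge_of_tendsto hs ?_
  filter_upwards [Ioc_mem_nhdsGT_of_mem ⟨le_refl t, htT⟩, self_mem_nhdsWithin] with s hsm hst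
  have h1 : 0 < f s := hpos s hsm
  have h2 : t < s := hst
  rw [slope_def_field]
  apply div_nonneg <;> [linarith; linarith]

private lemma aux_deriv_nonneg_left {f : ℝ → ℝ} {t d T : ℝ} (hf : HasDerivAt f d t)
    (hTt : T < t) (h0 : f t = 0) (hneg : ∀ s ∈ Set.Ico T t, f s < 0) : 0 ≤ d := by
  have hs : Filter.Tendsto (slope f t) (𝓝[<] t) (𝓝 d) :=
    (hasDerivAt_iff_tendsto_slope.1 hf).mono_left
      (nhdsWithin_mono _ (fun u hu => ne_of_lt hu))
  refine ge_of_tendsto hs ?_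
  filter_upwards [Ico_mem_nhdsLT_of_mem ⟨hTt, le_refl t⟩, self_mem_nhdsWithin] with s hsm hst
  have h1 : f s < 0 := hneg s hsm
  have h2 : s < t := hst
  rw [slope_def_field, div_nonneg_iff]
  right
  constructor <;> linarith

private lemma aux_eventually_neg {f : ℝ → ℝ} {d : ℝ} (hf : HasDerivAt f d 0)
    (h0 : f 0 = 0) (hd : d < 0) : ∃ δ > 0, ∀ s ∈ Set.Ioc 0 δ, f s < 0 := by
  have hs : Filter.Tendsto (slope f 0) (𝓝[>] 0) (𝓝 d) :=
    (hasDerivAt_iff_tendsto_slope.1 hf).mono_left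
      (nhdsWithin_mono _ (fun u hu => LT.lt.ne' hu))
  have hev : ∀ᶠ s in 𝓝[>] (0:ℝ), f s < 0 := by
    filter_upwards [hs.eventually_lt_const hd, self_mem_nhdsWithin] with s h1 h2
    have h3 : (0:ℝ) < s := h2
    have h4 : slope f 0 s = f s / s := by rw [slope_def_field, h0]; ring_nf
    rw [h4] at h1
    by_contra hcon
    push_neg at hcon
    exact absurd (div_nonneg hcon h3.le) (not_le.2 h1)
  obtain ⟨u, hu, hsub⟩ := mem_nhdsGT_iff_exists_Ioc_subset.1 hev
  exact ⟨u, hu, fun s hsm => hsub hsm⟩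

private lemma aux_one_sub_cos {q : ℝ} (h0 : 0 ≤ q) (h1 : q ≤ 1) : 1 - Real.cos q ≤ q := by
  have hq2 : Real.cos q = 2 * Real.cos (q/2) ^ 2 - 1 := by
    have h := Real.cos_two_mul (q/2)
    rw [show 2*(q/2) = q by ring] at h
    exact h
  have hp := Real.sin_sq_add_cos_sq (q/2)
  have hsle : Real.sin (q/2) ≤ q/2 := Real.sin_le (by linarith)
  have hs1 : Real.sin (q/2) ≤ 1 := Real.sin_le_one _
  have hsnn : 0 ≤ Real.sin (q/2) := Real.sin_nonneg_of_nonneg_of_le_pi (by linarith)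
    (by nlinarith [Real.pi_gt_three])
  nlinarith [sq_nonneg (Real.sin (q/2))]


set_option maxHeartbeats 1000000 in
/-- Item (1) of the second-period lemma: let `v` be a unit-speed (for the hyperbolic
metric of the upper half-plane) `C²` curve with `v(0) = (0,1)` and initial tangent
`−E₁ = (−1,0)`, whose geodesic curvature (computed by the conformal formula
`k_g = y·κ_e + x'/‖v'‖`) equals `2H − θ'` with `θ' > 0`, the total turning over any
subinterval of `[0,b]` being at most `φ < π/2`, and `2H ≤ 1`, `H > 0`. Then the first
coordinate of `v(s)` is strictly negative for all `s ∈ (0, b]` (otherwise Gauss–Bonnet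
applied to the region enclosed by `v` and the `y`-axis gives
`−area(U) = π/2 + α − ∫θ' + 2Hs₀ > 0`, a contradiction). -/
theorem stmt_12 (b φ H : ℝ) (hb : 0 < b) (hφ : φ < π / 2) (hH₀ : 0 < H)
    (hH₁ : 2 * H ≤ 1)
    (v : ℝ → ℝ × ℝ) (x' y' x'' y'' θ' : ℝ → ℝ)
    (hx' : ∀ s, HasDerivAt (fun u => (v u).1) (x' s) s)
    (hy' : ∀ s, HasDerivAt (fun u => (v u).2) (y' s) s)
    (hx'' : ∀ s, HasDerivAt x' (x'' s) s)
    (hy'' : ∀ s, HasDerivAt y' (y'' s) s)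
    (hup : ∀ s ∈ Set.Icc 0 b, 0 < (v s).2)
    (hunit : ∀ s ∈ Set.Icc 0 b, Real.sqrt (x' s ^ 2 + y' s ^ 2) = (v s).2)
    (hv0 : v 0 = (0, 1)) (hx'0 : x' 0 = -1) (hy'0 : y' 0 = 0)
    (hθ'pos : ∀ s ∈ Set.Icc 0 b, 0 < θ' s)
    (hθ'c : ContinuousOn θ' (Set.Icc 0 b))
    (hturn : ∀ s₁ s₂, 0 ≤ s₁ → s₁ ≤ s₂ → s₂ ≤ b → (∫ s in s₁..s₂, θ' s) ≤ φ)
    (hkg : ∀ s ∈ Set.Icc 0 b,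
      (v s).2 * (x' s * y'' s - y' s * x'' s) / (Real.sqrt (x' s ^ 2 + y' s ^ 2)) ^ 3 +
        x' s / Real.sqrt (x' s ^ 2 + y' s ^ 2) = 2 * H - θ' s) :
    ∀ s ∈ Set.Ioc 0 b, (v s).1 < 0 := by
  -- basic continuity facts
  have hYc : Continuous fun s => (v s).2 :=
    continuous_iff_continuousAt.mpr fun s => (hy' s).continuousAt
  have hXc : Continuous fun s => (v s).1 :=
    continuous_iff_continuousAt.mpr fun s => (hx' s).continuousAt
  have hx'c : Continuous x' := continuous_iff_continuousAt.mpr fun s => (hx'' s).continuousAt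
  have hy'c : Continuous y' := continuous_iff_continuousAt.mpr fun s => (hy'' s).continuousAt
  -- squared unit-speed identity
  have hC : ∀ s ∈ Set.Icc 0 b, x' s ^ 2 + y' s ^ 2 = (v s).2 ^ 2 := by
    intro s hs
    have h1 : Real.sqrt (x' s ^ 2 + y' s ^ 2) = (v s).2 := hunit s hs
    have h2 : (0:ℝ) ≤ x' s ^ 2 + y' s ^ 2 := by positivity
    rw [← h1]
    exact (Real.sq_sqrt h2).symm
  -- the (extended) derivative of the angle function
  have hgcont : ContinuousOn (fun s => 2 * H - θ' s - x' s / (v s).2) (Set.Icc 0 b) := by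
    apply ContinuousOn.sub
    · exact continuousOn_const.sub hθ'c
    · exact (hx'c.continuousOn).div (hYc.continuousOn) (fun s hs => (hup s hs).ne')
  obtain ⟨F, hFcont, hFeq⟩ : ∃ F : ℝ → ℝ, Continuous F ∧
      ∀ s ∈ Set.Icc 0 b, F s = 2 * H - θ' s - x' s / (v s).2 :=
    ⟨Set.IccExtend hb.le ((Set.Icc 0 b).restrict (fun s => 2 * H - θ' s - x' s / (v s).2)),
      (hgcont.restrict).comp continuous_projIcc,
      fun s hs => by rw [Set.IccExtend_of_mem hb.le _ hs]; rfl⟩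
  -- the angle function
  obtain ⟨ψ, hψd, hψeq⟩ : ∃ ψ : ℝ → ℝ, (∀ s, HasDerivAt ψ (F s) s) ∧
      ∀ s, ψ s = π + ∫ t in (0:ℝ)..s, F t :=
    ⟨fun s => π + ∫ t in (0:ℝ)..s, F t,
      fun s => ((hFcont.integral_hasStrictDerivAt 0 s).hasDerivAt).const_add π,
      fun s => rfl⟩
  have hψ0 : ψ 0 = π := by rw [hψeq]; simp
  have hψcont : Continuous ψ :=
    continuous_iff_continuousAt.mpr fun s => (hψd s).continuousAt
  -- the curvature relation, squared form
  have hB : ∀ s ∈ Set.Icc 0 b, x' s * y'' s - y' s * x'' s = (v s).2 ^ 2 * F s := by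
    intro s hs
    have hy0 := hup s hs
    have h1 := hkg s hs
    rw [hunit s hs] at h1
    have h1' : x' s * y'' s - y' s * x'' s
        = (2*H - θ' s) * (v s).2 ^ 2 - x' s * (v s).2 := by
      field_simp [hy0.ne'] at h1
      have h3 : (x' s * y'' s - y' s * x'' s) * ((v s).2 ^ 2)
          = ((2*H - θ' s) * (v s).2 ^ 2 - x' s * (v s).2) * ((v s).2 ^ 2) := by
        linear_combination (v s).2 ^ 2 * h1
      exact mul_right_cancel₀ (by positivity) h3
    rw [hFeq s hs, h1']
    field_simp [hy0.ne']
  -- differentiating the unit-speed identity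
  have hA : ∀ s ∈ Set.Icc 0 b, x' s * x'' s + y' s * y'' s = (v s).2 * y' s := by
    intro s hs
    have hNd : HasDerivAt (fun u => x' u * x' u + y' u * y' u - (v u).2 * (v u).2)
        ((x'' s * x' s + x' s * x'' s) + (y'' s * y' s + y' s * y'' s)
          - (y' s * (v s).2 + (v s).2 * y' s)) s :=
      (((hx'' s).mul (hx'' s)).add ((hy'' s).mul (hy'' s))).sub ((hy' s).mul (hy' s))
    have hzero : ∀ u ∈ Set.Icc 0 b,
        (fun u => x' u * x' u + y' u * y' u - (v u).2 * (v u).2) u = 0 := by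
      intro u hu
      have := hC u hu
      simp only
      nlinarith [this]
    have hud : UniqueDiffWithinAt ℝ (Set.Icc 0 b) s := uniqueDiffOn_Icc hb s hs
    have hw1 := (hNd.hasDerivWithinAt (s := Set.Icc 0 b)).derivWithin hud
    have hw2 : HasDerivWithinAt (fun u => x' u * x' u + y' u * y' u - (v u).2 * (v u).2) 0
        (Set.Icc 0 b) s :=
      (hasDerivWithinAt_const s (Set.Icc 0 b) (0:ℝ)).congr hzero (hzero s hs)
    have hw2' := hw2.derivWithin hud
    rw [hw2'] at hw1
    linarith [hw1]
  -- the unit tangent has angle ψ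
  have hr : ∀ s ∈ Set.Icc 0 b,
      x' s * Real.cos (ψ s) + y' s * Real.sin (ψ s) = (v s).2 := by
    obtain ⟨r, hrdef⟩ : ∃ r : ℝ → ℝ,
        r = fun s => (x' s * Real.cos (ψ s) + y' s * Real.sin (ψ s)) / (v s).2 := ⟨_, rfl⟩
    have hrd : ∀ s ∈ Set.Icc 0 b, HasDerivAt r 0 s := by
      intro s hs
      rw [hrdef]
      have hy0 := hup s hs
      have hcosd : HasDerivAt (fun u => Real.cos (ψ u)) (-Real.sin (ψ s) * F s) s :=
        (Real.hasDerivAt_cos (ψ s)).comp s (hψd s)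
      have hsind : HasDerivAt (fun u => Real.sin (ψ u)) (Real.cos (ψ s) * F s) s :=
        (Real.hasDerivAt_sin (ψ s)).comp s (hψd s)
      have hh : HasDerivAt (fun u => x' u * Real.cos (ψ u) + y' u * Real.sin (ψ u))
          (x'' s * Real.cos (ψ s) + x' s * (-Real.sin (ψ s) * F s)
            + (y'' s * Real.sin (ψ s) + y' s * (Real.cos (ψ s) * F s))) s :=
        ((hx'' s).mul hcosd).add ((hy'' s).mul hsind)
      have hdiv : HasDerivAt (fun s => (x' s * Real.cos (ψ s) + y' s * Real.sin (ψ s)) / (v s).2)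
          (((x'' s * Real.cos (ψ s) + x' s * (-Real.sin (ψ s) * F s)
            + (y'' s * Real.sin (ψ s) + y' s * (Real.cos (ψ s) * F s))) * (v s).2
          - (x' s * Real.cos (ψ s) + y' s * Real.sin (ψ s)) * y' s) / (v s).2 ^ 2) s :=
        hh.div (hy' s) hy0.ne'
      have e1 : x'' s * (v s).2 ^ 2 = x' s * (v s).2 * y' s - (v s).2 ^ 2 * y' s * F s := by
        linear_combination (x' s) * hA s hs - (y' s) * hB s hs - (x'' s) * hC s hs
      have e2 : y'' s * (v s).2 ^ 2 = y' s ^ 2 * (v s).2 + x' s * (v s).2 ^ 2 * F s := by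
        linear_combination (y' s) * hA s hs + (x' s) * hB s hs - (y'' s) * hC s hs
      have hmul : ((x'' s * Real.cos (ψ s) + x' s * (-Real.sin (ψ s) * F s)
            + (y'' s * Real.sin (ψ s) + y' s * (Real.cos (ψ s) * F s))) * (v s).2
          - (x' s * Real.cos (ψ s) + y' s * Real.sin (ψ s)) * y' s) * (v s).2 = 0 := by
        linear_combination (Real.cos (ψ s)) * e1 + (Real.sin (ψ s)) * e2
      have hnum : (x'' s * Real.cos (ψ s) + x' s * (-Real.sin (ψ s) * F s)
            + (y'' s * Real.sin (ψ s) + y' s * (Real.cos (ψ s) * F s))) * (v s).2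
          - (x' s * Real.cos (ψ s) + y' s * Real.sin (ψ s)) * y' s = 0 :=
        (mul_eq_zero.1 hmul).resolve_right hy0.ne'
      rw [hnum, zero_div] at hdiv
      exact hdiv
    have hrcont : ContinuousOn r (Set.Icc 0 b) := fun s hs =>
      ((hrd s hs).continuousAt).continuousWithinAt
    have hconst := constant_of_has_deriv_right_zero hrcont
      (fun s hs => ((hrd s ⟨hs.1, hs.2.le⟩)).hasDerivWithinAt)
    intro s hs
    have h1 := hconst s hs
    have hr0 : r 0 = 1 := by
      rw [hrdef]
      simp only
      rw [hψ0, hx'0, hy'0, hv0]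
      simp [Real.cos_pi, Real.sin_pi]
    rw [hr0, hrdef] at h1
    simp only at h1
    have hy0 := hup s hs
    rw [div_eq_one_iff_eq hy0.ne'] at h1
    exact h1
  -- tangent components
  have hxy : ∀ s ∈ Set.Icc 0 b,
      x' s = (v s).2 * Real.cos (ψ s) ∧ y' s = (v s).2 * Real.sin (ψ s) := by
    intro s hs
    have h1 := hr s hs
    have h2 := hC s hs
    have h3 := Real.sin_sq_add_cos_sq (ψ s)
    have hsq : (x' s - (v s).2 * Real.cos (ψ s)) ^ 2
        + (y' s - (v s).2 * Real.sin (ψ s)) ^ 2 = 0 := by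
      linear_combination h2 + (v s).2 ^ 2 * h3 - 2 * (v s).2 * h1
    constructor
    · nlinarith [sq_nonneg (x' s - (v s).2 * Real.cos (ψ s)),
        sq_nonneg (y' s - (v s).2 * Real.sin (ψ s))]
    · nlinarith [sq_nonneg (x' s - (v s).2 * Real.cos (ψ s)),
        sq_nonneg (y' s - (v s).2 * Real.sin (ψ s))]
  -- F = 2H - θ' - cos ψ on [0,b]
  have hFcos : ∀ s ∈ Set.Icc 0 b, F s = 2 * H - θ' s - Real.cos (ψ s) := by
    intro s hs
    rw [hFeq s hs, (hxy s hs).1]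
    field_simp [(hup s hs).ne']
  have hπpos := Real.pi_pos
  have hφ0 : 0 ≤ φ := by
    have := hturn 0 0 le_rfl le_rfl hb.le
    simpa using this
  -- lower bound: ψ > π/2 on [0,b]
  have hψlo : ∀ s ∈ Set.Icc 0 b, π/2 < ψ s := by
    by_contra hcon
    push_neg at hcon
    obtain ⟨t₁', ht₁', hle⟩ := hcon
    obtain ⟨t₀, ht₀, hψt₀, hlt⟩ := aux_first_ge (f := fun s => -ψ s) (a := 0) (b := b)
      (c := -(π/2)) (hψcont.neg.continuousOn) (by show -ψ 0 < -(π/2); rw [hψ0]; linarith)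
      ⟨t₁', ht₁', by show -(π/2) ≤ -ψ t₁'; linarith⟩
    have hψt₀' : ψ t₀ = π/2 := by
      have h := hψt₀; linarith
    obtain ⟨t₁, ht₁m, hψt₁, hgt⟩ := aux_last_le (f := fun s => -ψ s) (a := 0) (b := t₀)
      (c := -π) ht₀.1.le (hψcont.neg.continuousOn) (by show -ψ 0 ≤ -π; rw [hψ0])
      (by show -π < -ψ t₀; rw [hψt₀']; linarith)
    have hψt₁' : ψ t₁ = π := by
      have h := hψt₁; linarith
    have ht₁0 : 0 ≤ t₁ := ht₁m.1
    have ht₁t₀ : t₁ < t₀ := ht₁m.2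
    have hsub : Set.Icc t₁ t₀ ⊆ Set.Icc 0 b := Set.Icc_subset_Icc ht₁0 ht₀.2
    have hbound : ∀ s ∈ Set.Icc t₁ t₀, π/2 ≤ ψ s ∧ ψ s ≤ π := by
      intro s hsm
      constructor
      · rcases eq_or_lt_of_le hsm.2 with h | h
        · rw [h, hψt₀']
        · have := hlt s ⟨ht₁0.trans hsm.1, h⟩
          linarith
      · rcases eq_or_lt_of_le hsm.1 with h | h
        · rw [← h, hψt₁']
        · have := hgt s ⟨h, hsm.2⟩
          linarith
    have hIntF : (∫ s in (0:ℝ)..t₀, F s) - ∫ s in (0:ℝ)..t₁, F s = ∫ s in t₁..t₀, F s :=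
      intervalIntegral.integral_interval_sub_left (hFcont.intervalIntegrable 0 t₀)
        (hFcont.intervalIntegrable 0 t₁)
    have hInt : ψ t₀ - ψ t₁ = ∫ s in t₁..t₀, F s := by
      rw [hψeq t₀, hψeq t₁]
      linarith [hIntF]
    have hFint : IntervalIntegrable F MeasureTheory.volume t₁ t₀ :=
      hFcont.intervalIntegrable _ _
    have hθint : IntervalIntegrable (fun s => -θ' s) MeasureTheory.volume t₁ t₀ := by
      apply ContinuousOn.intervalIntegrable
      rw [Set.uIcc_of_le ht₁t₀.le]
      exact (hθ'c.mono hsub).neg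
    have hmono : (∫ s in t₁..t₀, -θ' s) ≤ ∫ s in t₁..t₀, F s := by
      apply intervalIntegral.integral_mono_on ht₁t₀.le hθint hFint
      intro s hsm
      have hsI := hsub hsm
      show -θ' s ≤ F s
      rw [hFcos s hsI]
      have hcos : Real.cos (ψ s) ≤ 0 :=
        Real.cos_nonpos_of_pi_div_two_le_of_le (hbound s hsm).1
          (by linarith [(hbound s hsm).2, Real.pi_pos])
      linarith
    have hnegint : (∫ s in t₁..t₀, -θ' s) = -∫ s in t₁..t₀, θ' s := by
      simpa using intervalIntegral.integral_neg (f := θ')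
    have hturn' := hturn t₁ t₀ ht₁0 ht₁t₀.le ht₀.2
    rw [hψt₀', hψt₁'] at hInt
    rw [hnegint] at hmono
    linarith
  -- upper bound: ψ < 2π on [0,b]
  have hψhi : ∀ s ∈ Set.Icc 0 b, ψ s < 2*π := by
    by_contra hcon
    push_neg at hcon
    obtain ⟨t', ht', hge⟩ := hcon
    obtain ⟨t, htm, hψt, hlt2⟩ := aux_first_ge (f := ψ) (a := 0) (b := b) (c := 2*π)
      hψcont.continuousOn (by rw [hψ0]; linarith) ⟨t', ht', hge⟩
    obtain ⟨t₂, ht₂m, hψt₂, hgt2⟩ := aux_last_le (f := ψ) (a := 0) (b := t) (c := 2*π - 1)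
      htm.1.le hψcont.continuousOn (by rw [hψ0]; linarith [Real.pi_gt_three])
      (by rw [hψt]; linarith)
    obtain ⟨M, hMdef⟩ : ∃ M : ℝ → ℝ, M = fun s => (2*π - ψ s) * Real.exp s := ⟨_, rfl⟩
    have hMd : ∀ s, HasDerivAt M (-F s * Real.exp s + (2*π - ψ s) * Real.exp s) s := by
      intro s
      rw [hMdef]
      have h1 : HasDerivAt (fun u => 2*π - ψ u) (-F s) s := (hψd s).const_sub (2*π)
      exact h1.mul (Real.hasDerivAt_exp s)
    have hmono : MonotoneOn M (Set.Icc t₂ t) := by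
      apply monotoneOn_of_deriv_nonneg (convex_Icc _ _)
      · exact Continuous.continuousOn
          (continuous_iff_continuousAt.mpr fun s => (hMd s).continuousAt)
      · intro s hs
        exact ((hMd s).differentiableAt).differentiableWithinAt
      · intro s hsint
        rw [interior_Icc] at hsint
        have hs0 : 0 ≤ s := ht₂m.1.trans hsint.1.le
        have hsI : s ∈ Set.Icc 0 b := ⟨hs0, hsint.2.le.trans htm.2⟩
        have hq1 : ψ s < 2*π := hlt2 s ⟨hs0, hsint.2⟩
        have hq2 : 2*π - 1 < ψ s := hgt2 s ⟨hsint.1, hsint.2.le⟩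
        rw [(hMd s).deriv]
        have hcosv : Real.cos (ψ s) = Real.cos (2*π - ψ s) := (Real.cos_two_pi_sub _).symm
        have hFv := hFcos s hsI
        have hθv := hθ'pos s hsI
        have h1c := aux_one_sub_cos (q := 2*π - ψ s) (by linarith) (by linarith)
        rw [← hcosv] at h1c
        have hkey : 0 ≤ -F s + (2*π - ψ s) := by
          rw [hFv]
          linarith
        nlinarith [Real.exp_pos s]
    have hle := hmono (Set.mem_Icc.2 ⟨le_refl t₂, ht₂m.2.le⟩)
      (Set.mem_Icc.2 ⟨ht₂m.2.le, le_refl t⟩) ht₂m.2.le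
    rw [hMdef] at hle
    simp only at hle
    rw [hψt, hψt₂] at hle
    nlinarith [Real.exp_pos t₂]
  -- positivity of cos((ψ-π)/2)
  have hcu : ∀ s ∈ Set.Icc 0 b, 0 < Real.cos ((ψ s - π)/2) := by
    intro s hs
    apply Real.cos_pos_of_mem_Ioo
    constructor
    · have := hψlo s hs; linarith
    · have := hψhi s hs; linarith
  -- the barrier function D
  obtain ⟨D, hDdef⟩ : ∃ D : ℝ → ℝ,
      D = fun s => (v s).1 / (v s).2 + Real.tan ((ψ s - π)/2) := ⟨_, rfl⟩
  have hD0 : D 0 = 0 := by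
    rw [hDdef]
    simp only
    rw [hψ0, hv0]
    simp [Real.tan_zero]
  have hDd : ∀ s ∈ Set.Icc 0 b, HasDerivAt D
      ((x' s * (v s).2 - (v s).1 * y' s) / (v s).2 ^ 2
        + 1 / Real.cos ((ψ s - π)/2) ^ 2 * (F s / 2)) s := by
    intro s hs
    rw [hDdef]
    have hy0 := hup s hs
    have h1 : HasDerivAt (fun u => (v u).1 / (v u).2)
        ((x' s * (v s).2 - (v s).1 * y' s) / (v s).2 ^ 2) s :=
      (hx' s).div (hy' s) hy0.ne'
    have h2 : HasDerivAt (fun u => (ψ u - π)/2) (F s / 2) s :=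
      ((hψd s).sub_const π).div_const 2
    have h3 : HasDerivAt (fun u => Real.tan ((ψ u - π)/2))
        (1 / Real.cos ((ψ s - π)/2) ^ 2 * (F s / 2)) s :=
      by have := (Real.hasDerivAt_tan (hcu s hs).ne').comp s h2; exact this
    exact h1.add h3
  have hDcont : ContinuousOn D (Set.Icc 0 b) := fun s hs =>
    ((hDd s hs).continuousAt).continuousWithinAt
  -- invariance: D ≤ 0 on [0,b]
  have hDle : ∀ s ∈ Set.Icc 0 b, D s ≤ 0 := by
    by_contra hcon
    push_neg at hcon
    obtain ⟨t, ht, hDt⟩ := hcon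
    obtain ⟨t₀, ht₀m, hDt₀, hgt⟩ := aux_last_le (f := D) (a := 0) (b := t) (c := 0)
      ht.1 (hDcont.mono (Set.Icc_subset_Icc le_rfl ht.2)) (le_of_eq hD0) hDt
    have ht₀I : t₀ ∈ Set.Icc 0 b := ⟨ht₀m.1, ht₀m.2.le.trans ht.2⟩
    have hy0 := hup t₀ ht₀I
    have hd := hDd t₀ ht₀I
    have hnonneg : 0 ≤ (x' t₀ * (v t₀).2 - (v t₀).1 * y' t₀) / (v t₀).2 ^ 2
        + 1 / Real.cos ((ψ t₀ - π)/2) ^ 2 * (F t₀ / 2) :=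
      aux_deriv_nonneg_right hd ht₀m.2 hDt₀ (fun s hsm => hgt s hsm)
    -- now derive a contradiction by computing the derivative value
    rw [hDdef] at hDt₀
    simp only at hDt₀
    set u := (ψ t₀ - π)/2 with hudef
    have hP : ψ t₀ = π + 2*u := by rw [hudef]; ring
    have hcP : Real.cos (ψ t₀) = -(1 - 2*Real.sin u ^ 2) := by
      rw [hP, Real.cos_add, Real.cos_pi, Real.sin_pi, Real.cos_two_mul]
      linear_combination (-2) * Real.sin_sq_add_cos_sq u
    have hsP : Real.sin (ψ t₀) = -(2 * Real.sin u * Real.cos u) := by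
      rw [hP, Real.sin_add, Real.cos_pi, Real.sin_pi, Real.sin_two_mul]
      ring
    have hcu0 : 0 < Real.cos u := hcu t₀ ht₀I
    have htan : Real.tan u = Real.sin u / Real.cos u := Real.tan_eq_sin_div_cos u
    have hDt0' : (v t₀).1 * Real.cos u = -((v t₀).2 * Real.sin u) := by
      have : (v t₀).1 / (v t₀).2 + Real.tan u = 0 := hDt₀
      rw [htan] at this
      field_simp [hcu0.ne', hy0.ne'] at this
      linarith [this]
    have hx'v := (hxy t₀ ht₀I).1
    have hy'v := (hxy t₀ ht₀I).2
    have hFv := hFcos t₀ ht₀I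
    have hθv := hθ'pos t₀ ht₀I
    have hpyth := Real.sin_sq_add_cos_sq u
    -- numerator simplification : x'Y - Xy' = -Y^2
    have hApoly : x' t₀ * (v t₀).2 - (v t₀).1 * y' t₀ = -(v t₀).2 ^ 2 := by
      rw [hx'v, hy'v, hcP, hsP]
      linear_combination (2*(v t₀).2*Real.sin u) * hDt0'
    rw [hApoly] at hnonneg
    have hneg1 : (-(v t₀).2 ^ 2) / (v t₀).2 ^ 2 = -1 := by
      field_simp [hy0.ne']
    rw [hneg1] at hnonneg
    have hFval : F t₀ = 2*H - θ' t₀ + 1 - 2 * Real.sin u ^ 2 := by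
      rw [hFv, hcP]; ring
    rw [hFval] at hnonneg
    have hcusq : 0 < Real.cos u ^ 2 := by positivity
    have h5 : 1 ≤ 1 / Real.cos u ^ 2 * ((2*H - θ' t₀ + 1 - 2 * Real.sin u ^ 2) / 2) := by
      linarith
    have h7 : 1 / Real.cos u ^ 2 * ((2*H - θ' t₀ + 1 - 2 * Real.sin u ^ 2) / 2)
        = (2*H - θ' t₀ + 1 - 2 * Real.sin u ^ 2) / (2 * Real.cos u ^ 2) := by
      ring
    rw [h7] at h5
    have h8 : 2 * Real.cos u ^ 2 ≤ 2*H - θ' t₀ + 1 - 2 * Real.sin u ^ 2 :=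
      (one_le_div (by positivity)).1 h5
    linarith [hpyth, hθv, hH₁]
  -- conclusion
  intro s hs
  by_contra hxscon
  push_neg at hxscon
  have hsI : s ∈ Set.Icc 0 b := ⟨hs.1.le, hs.2⟩
  obtain ⟨w, hwdef⟩ : ∃ w : ℝ → ℝ, w = fun u => (v u).1 / (v u).2 := ⟨_, rfl⟩
  have hws : 0 ≤ w s := by rw [hwdef]; exact div_nonneg hxscon (hup s hsI).le
  have h0I : (0:ℝ) ∈ Set.Icc 0 b := ⟨le_rfl, hb.le⟩
  have hwd0 : HasDerivAt w (-1) 0 := by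
    rw [hwdef]
    have h1 : HasDerivAt (fun u => (v u).1 / (v u).2)
        ((x' 0 * (v 0).2 - (v 0).1 * y' 0) / (v 0).2 ^ 2) 0 :=
      (hx' 0).div (hy' 0) (hup 0 h0I).ne'
    have h2 : (x' 0 * (v 0).2 - (v 0).1 * y' 0) / (v 0).2 ^ 2 = -1 := by
      rw [hx'0, hy'0, hv0]; norm_num
    rwa [h2] at h1
  have hw00 : w 0 = 0 := by rw [hwdef]; simp [hv0]
  obtain ⟨δ, hδpos, hδ⟩ := aux_eventually_neg hwd0 hw00 (by norm_num)
  have hδs : δ < s := by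
    by_contra hcon
    push_neg at hcon
    have := hδ s ⟨hs.1, hcon⟩
    linarith
  have hsubδ : Set.Icc δ s ⊆ Set.Icc 0 b := Set.Icc_subset_Icc hδpos.le hs.2
  have hwcont : ContinuousOn w (Set.Icc δ s) := by
    rw [hwdef]
    apply ContinuousOn.div (hXc.continuousOn) (hYc.continuousOn)
    exact fun u hu => (hup u (hsubδ hu)).ne'
  obtain ⟨s₀, hs₀m, hws₀, hwlt⟩ := aux_first_ge (f := w) (a := δ) (b := s) (c := 0)
    hwcont (hδ δ ⟨hδpos, le_rfl⟩) ⟨s, ⟨hδs.le, le_rfl⟩, hws⟩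
  have hs₀I : s₀ ∈ Set.Icc 0 b := ⟨(hδpos.trans hs₀m.1).le, hs₀m.2.trans hs.2⟩
  have hy₀pos := hup s₀ hs₀I
  have hx₀0 : (v s₀).1 = 0 := by
    rw [hwdef] at hws₀
    simp only at hws₀
    exact (div_eq_zero_iff.1 hws₀).resolve_right hy₀pos.ne'
  have hwds₀ : HasDerivAt w (Real.cos (ψ s₀)) s₀ := by
    rw [hwdef]
    have h1 : HasDerivAt (fun u => (v u).1 / (v u).2)
        ((x' s₀ * (v s₀).2 - (v s₀).1 * y' s₀) / (v s₀).2 ^ 2) s₀ :=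
      (hx' s₀).div (hy' s₀) hy₀pos.ne'
    have h2 : (x' s₀ * (v s₀).2 - (v s₀).1 * y' s₀) / (v s₀).2 ^ 2 = Real.cos (ψ s₀) := by
      rw [(hxy s₀ hs₀I).1, hx₀0]
      field_simp [hy₀pos.ne']
      ring
    rwa [h2] at h1
  have hcos0 : 0 ≤ Real.cos (ψ s₀) :=
    aux_deriv_nonneg_left hwds₀ hs₀m.1 hws₀ (fun u hu => hwlt u hu)
  have hψs₀ : 3*π/2 ≤ ψ s₀ := by
    by_contra hcon
    push_neg at hcon
    have h1 : 0 < Real.cos (ψ s₀ - π) := Real.cos_pos_of_mem_Ioo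
      ⟨by linarith [hψlo s₀ hs₀I], by linarith⟩
    rw [Real.cos_sub_pi] at h1
    linarith
  have hDs₀ := hDle s₀ hs₀I
  have hDval : D s₀ = Real.tan ((ψ s₀ - π)/2) := by
    rw [hDdef]
    simp only
    rw [hx₀0]
    simp
  have htanpos : 0 < Real.tan ((ψ s₀ - π)/2) := by
    apply Real.tan_pos_of_pos_of_lt_pi_div_two
    · linarith
    · linarith [hψhi s₀ hs₀I]
  rw [hDval] at hDs₀
  linarith
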